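/- Let r be an integer with r ≥ e^{25}, let m ∈ ℝ, s > 0, and let X_1,…,X_r be i.i.d. Gaussian random variables with mean m and variance s². Set z = √(log r) + 1. Then P(max_{1≤j≤r} X_j > m + z·s) ≥ 1 − 1/r². -/

import Mathlib

open MeasureTheory ProbabilityTheory Real
open scoped NNReal ENNReal

private lemma exp_taylor_cubic {x : ℝ} (hx : 0 ≤ x) :
    1 + x + x ^ 2 / 2 + x ^ 3 / 6 ≤ Real.exp x := by
  have h := Real.sum_le_exp_of_nonneg hx 4
  simp [Finset.sum_range_succ, Nat.factorial] at h
  linarith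

private lemma sqrt_two_pi_le : Real.sqrt (2 * Real.pi) ≤ 2.51 := by
  have h : 2 * Real.pi ≤ 2.51 ^ 2 := by nlinarith [Real.pi_lt_d2]
  calc Real.sqrt (2 * Real.pi) ≤ Real.sqrt (2.51 ^ 2) := Real.sqrt_le_sqrt h
    _ = 2.51 := Real.sqrt_sq (by norm_num)

private lemma exp_seven_ge : (1096 : ℝ) ≤ Real.exp 7 := by
  have h : Real.exp 7 = Real.exp 1 ^ 7 := by
    rw [← Real.exp_nat_mul]; norm_num
  have he := Real.exp_one_gt_d9.le
  calc (1096 : ℝ) ≤ 2.7182818283 ^ 7 := by norm_num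
    _ ≤ Real.exp 1 ^ 7 := pow_le_pow_left₀ (by norm_num) he 7
    _ = Real.exp 7 := h.symm

/-- Lower bound for the tail integral of the (unnormalized) Gaussian density. -/
private lemma tail_integral_lb {z : ℝ} (hz : 1 ≤ z) :
    Real.exp (-z ^ 2 / 2) * ((z ^ 2 - 1) / z ^ 3) ≤
      ∫ u in (0:ℝ)..(Real.sqrt 2), Real.exp (-(u + z) ^ 2 / 2) := by
  have hz0 : 0 < z := lt_of_lt_of_le one_pos hz
  have hzne : z ≠ 0 := hz0.ne'
  set F : ℝ → ℝ := fun u => Real.exp (-z * u) *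
      (u ^ 2 / (2 * z) + u / z ^ 2 + (1 / z ^ 3 - 1 / z)) with hFdef
  have hder : ∀ u ∈ Set.uIcc (0:ℝ) (Real.sqrt 2),
      HasDerivAt F (Real.exp (-z * u) * (1 - u ^ 2 / 2)) u := by
    intro u _
    have he : HasDerivAt (fun u : ℝ => Real.exp (-z * u))
        (Real.exp (-z * u) * (-z * 1)) u :=
      ((hasDerivAt_id u).const_mul (-z)).exp
    have h1 := (hasDerivAt_pow 2 u).div_const (2 * z)
    have h2 := (hasDerivAt_id u).div_const (z ^ 2)
    have hp := (h1.add h2).add_const (1 / z ^ 3 - 1 / z)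
    have h := he.mul hp
    convert h using 1
    · rfl
    · rfl
    · rfl
    simp only [Pi.add_apply, id_eq]
    field_simp
    ring
  have hint : IntervalIntegrable (fun u => Real.exp (-z * u) * (1 - u ^ 2 / 2))
      volume 0 (Real.sqrt 2) := (by continuity : Continuous _).intervalIntegrable _ _
  have hFTC : ∫ u in (0:ℝ)..(Real.sqrt 2), Real.exp (-z * u) * (1 - u ^ 2 / 2)
      = F (Real.sqrt 2) - F 0 :=
    intervalIntegral.integral_eq_sub_of_hasDerivAt hder hint
  have hmono : ∫ u in (0:ℝ)..(Real.sqrt 2),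
        Real.exp (-z ^ 2 / 2) * (Real.exp (-z * u) * (1 - u ^ 2 / 2))
      ≤ ∫ u in (0:ℝ)..(Real.sqrt 2), Real.exp (-(u + z) ^ 2 / 2) := by
    apply intervalIntegral.integral_mono_on (Real.sqrt_nonneg 2)
      ((by continuity : Continuous _).intervalIntegrable _ _)
      ((by continuity : Continuous _).intervalIntegrable _ _)
    intro u _
    have h1 : 1 - u ^ 2 / 2 ≤ Real.exp (-u ^ 2 / 2) := by
      have := Real.add_one_le_exp (-u ^ 2 / 2); linarith
    have heq : Real.exp (-(u + z) ^ 2 / 2)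
        = Real.exp (-z ^ 2 / 2) * Real.exp (-z * u) * Real.exp (-u ^ 2 / 2) := by
      rw [← Real.exp_add, ← Real.exp_add]; ring_nf
    rw [heq]
    have e1 := Real.exp_pos (-z ^ 2 / 2)
    have e2 := Real.exp_pos (-z * u)
    nlinarith [e1.le, e2.le, mul_pos e1 e2]
  rw [intervalIntegral.integral_const_mul, hFTC] at hmono
  refine le_trans ?_ hmono
  have h2 : (Real.sqrt 2) ^ 2 = 2 := Real.sq_sqrt (by norm_num)
  have hF0 : F 0 = 1 / z ^ 3 - 1 / z := by simp [hFdef]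
  have hFs : 0 ≤ F (Real.sqrt 2) := by
    have hinner : 0 ≤ (Real.sqrt 2) ^ 2 / (2 * z) + Real.sqrt 2 / z ^ 2
        + (1 / z ^ 3 - 1 / z) := by
      rw [h2]
      have h2z : (2:ℝ) / (2 * z) = 1 / z := by field_simp
      rw [h2z]
      have : 0 ≤ Real.sqrt 2 / z ^ 2 := by positivity
      have : 0 ≤ 1 / z ^ 3 := by positivity
      linarith
    exact mul_nonneg (Real.exp_pos _).le hinner
  have hval : (z ^ 2 - 1) / z ^ 3 ≤ F (Real.sqrt 2) - F 0 := by
    rw [hF0]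
    have : (z ^ 2 - 1) / z ^ 3 = 1 / z - 1 / z ^ 3 := by field_simp
    linarith
  exact mul_le_mul_of_nonneg_left hval (Real.exp_pos _).le

private lemma key_poly {E u spi : ℝ} (hu0 : 0 ≤ u) (hspi : 0 ≤ spi)
    (hspi' : spi ≤ 2.51)
    (hE : 1096 * (1 + 4 * u + 8 * u ^ 2 + 32 * u ^ 3 / 3) ≤ E) :
    2 * (u + 5) ^ 2 * (spi * (u + 6) ^ 3) ≤ E * ((u + 6) ^ 2 - 1) := by
  calc 2 * (u + 5) ^ 2 * (spi * (u + 6) ^ 3)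
      ≤ 2 * (u + 5) ^ 2 * (2.51 * (u + 6) ^ 3) := by
        have h1 : (0:ℝ) ≤ 2 * (u + 5) ^ 2 := by positivity
        have h2 : (0:ℝ) ≤ (u + 6) ^ 3 := by positivity
        nlinarith [mul_le_mul_of_nonneg_right hspi' h2]
    _ ≤ 1096 * (1 + 4 * u + 8 * u ^ 2 + 32 * u ^ 3 / 3) * ((u + 6) ^ 2 - 1) := by
        nlinarith [hu0, sq_nonneg u, pow_nonneg hu0 3, pow_nonneg hu0 4, pow_nonneg hu0 5]
    _ ≤ E * ((u + 6) ^ 2 - 1) := mul_le_mul_of_nonneg_right hE (by nlinarith)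

/-- The key numeric inequality : `r·mass ≥ 2 log r`. -/
private lemma key_numeric {L : ℝ} (hL : 25 ≤ L) :
    2 * L ≤ Real.exp L * (Real.exp (-(Real.sqrt L + 1) ^ 2 / 2) *
      (((Real.sqrt L + 1) ^ 2 - 1) /
        (Real.sqrt (2 * Real.pi) * (Real.sqrt L + 1) ^ 3))) := by
  set t := Real.sqrt L with htdef
  have hL0 : (0:ℝ) ≤ L := by linarith
  have ht2 : t ^ 2 = L := Real.sq_sqrt hL0
  have ht5 : 5 ≤ t := by
    have h := Real.sqrt_le_sqrt hL
    rwa [show (25:ℝ) = 5 ^ 2 by norm_num, Real.sqrt_sq (by norm_num : (0:ℝ) ≤ 5)] at h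
  set u := t - 5 with hudef
  have hu0 : 0 ≤ u := by linarith
  have htu : t = u + 5 := by rw [hudef]; ring
  have hsp : 0 < Real.sqrt (2 * Real.pi) := Real.sqrt_pos.mpr (by positivity)
  have hC : 0 < Real.sqrt (2 * Real.pi) * (t + 1) ^ 3 := by positivity
  rw [show Real.exp L * (Real.exp (-(t + 1) ^ 2 / 2) *
        (((t + 1) ^ 2 - 1) / (Real.sqrt (2 * Real.pi) * (t + 1) ^ 3)))
      = (Real.exp L * Real.exp (-(t + 1) ^ 2 / 2) * ((t + 1) ^ 2 - 1)) /
        (Real.sqrt (2 * Real.pi) * (t + 1) ^ 3) by ring,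
    le_div_iff₀ hC]
  have hexp : Real.exp L * Real.exp (-(t + 1) ^ 2 / 2)
      = Real.exp (u ^ 2 / 2 + 4 * u + 7) := by
    rw [← Real.exp_add]; congr 1; rw [← ht2, htu]; ring
  rw [hexp]
  -- exponential lower bound
  have hE : 1096 * (1 + 4 * u + 8 * u ^ 2 + 32 * u ^ 3 / 3)
      ≤ Real.exp (u ^ 2 / 2 + 4 * u + 7) := by
    have h3 : 1 + 4 * u + (4 * u) ^ 2 / 2 + (4 * u) ^ 3 / 6 ≤ Real.exp (4 * u) :=
      exp_taylor_cubic (by linarith)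
    have h3' : 1 + 4 * u + 8 * u ^ 2 + 32 * u ^ 3 / 3 ≤ Real.exp (4 * u) := by
      nlinarith [h3]
    have h4 : (1096:ℝ) ≤ Real.exp 7 := exp_seven_ge
    calc 1096 * (1 + 4 * u + 8 * u ^ 2 + 32 * u ^ 3 / 3)
        ≤ Real.exp 7 * Real.exp (4 * u) := by
          apply mul_le_mul h4 h3' (by nlinarith) (Real.exp_pos _).le
      _ = Real.exp (4 * u + 7) := by rw [← Real.exp_add]; ring_nf
      _ ≤ Real.exp (u ^ 2 / 2 + 4 * u + 7) := Real.exp_le_exp.mpr (by nlinarith)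
  have hgoal := key_poly (E := Real.exp (u ^ 2 / 2 + 4 * u + 7)) hu0 hsp.le sqrt_two_pi_le hE
  rw [← ht2, htu]
  have e1 : 2 * (u + 5) ^ 2 * (Real.sqrt (2 * Real.pi) * (u + 5 + 1) ^ 3)
      = 2 * (u + 5) ^ 2 * (Real.sqrt (2 * Real.pi) * (u + 6) ^ 3) := by ring
  have e2 : Real.exp (u ^ 2 / 2 + 4 * u + 7) * ((u + 5 + 1) ^ 2 - 1)
      = Real.exp (u ^ 2 / 2 + 4 * u + 7) * ((u + 6) ^ 2 - 1) := by ring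
  rw [e1, e2]
  exact hgoal

/-- **Maximum of i.i.d. Gaussians.** Let `r ≥ e²⁵` be an integer and let `X_1,…,X_r` be
i.i.d. Gaussian random variables with mean `m` and variance `s² > 0`. With
`z = √(log r) + 1`, `P(max_j X_j > m + z·s) ≥ 1 − 1/r²`. -/
theorem max_iid_gaussians_tail {Ω : Type*} [MeasurableSpace Ω]
    (P : Measure Ω) [IsProbabilityMeasure P]
    (r : ℕ) (hr : Real.exp 25 ≤ (r : ℝ)) (m s : ℝ) (hs : 0 < s)
    (X : Fin r → Ω → ℝ) (hmeas : ∀ j, Measurable (X j))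
    (hindep : iIndepFun X P)
    (hlaw : ∀ j, Measure.map (X j) P = gaussianReal m ⟨s ^ 2, sq_nonneg s⟩) :
    1 - 1 / (r : ℝ) ^ 2 ≤
      (P {ω | ∃ j, m + (Real.sqrt (Real.log r) + 1) * s < X j ω}).toReal := by
  -- basic positivity facts
  have hr0 : (0:ℝ) < r := lt_of_lt_of_le (Real.exp_pos 25) hr
  have hL : 25 ≤ Real.log r := by
    have := Real.log_le_log (Real.exp_pos 25) hr
    rwa [Real.log_exp] at this
  set z : ℝ := Real.sqrt (Real.log r) + 1 with hzdef
  have hz6 : 6 ≤ z := by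
    have h := Real.sqrt_le_sqrt hL
    rw [show (25:ℝ) = 5 ^ 2 by norm_num, Real.sqrt_sq (by norm_num : (0:ℝ) ≤ 5)] at h
    simp only [hzdef]; linarith
  have hz1 : 1 ≤ z := by linarith
  set c : ℝ := m + z * s with hcdef
  set v : ℝ≥0 := ⟨s ^ 2, sq_nonneg s⟩ with hvdef
  have hv : v ≠ 0 := by
    intro h
    have : (v : ℝ) = 0 := by rw [h]; simp
    have : s ^ 2 = 0 := this
    exact (pow_ne_zero 2 hs.ne') this
  have hvcoe : (v : ℝ) = s ^ 2 := rfl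
  set mass : ℝ := Real.exp (-z ^ 2 / 2) * ((z ^ 2 - 1) / (Real.sqrt (2 * Real.pi) * z ^ 3))
    with hmassdef
  have hsp : 0 < Real.sqrt (2 * Real.pi) := Real.sqrt_pos.mpr (by positivity)
  have hmass0 : 0 ≤ mass := by
    rw [hmassdef]
    have : (0:ℝ) ≤ z ^ 2 - 1 := by nlinarith
    positivity
  -- Step 1 : lower bound for the Gaussian tail probability
  set d : ℝ := s * Real.sqrt 2 + c with hddef
  have hcd : c ≤ d := by
    have : 0 ≤ s * Real.sqrt 2 := by positivity
    rw [hddef]; linarith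
  have hpdf : ∀ x : ℝ, gaussianPDFReal m v (s * x + c)
      = (Real.sqrt (2 * Real.pi))⁻¹ * s⁻¹ * Real.exp (-(x + z) ^ 2 / 2) := by
    intro x
    rw [gaussianPDFReal]
    have hsm : s * x + c - m = s * (x + z) := by rw [hcdef]; ring
    have h1 : (2 * Real.pi * (v:ℝ)) = 2 * Real.pi * s ^ 2 := by rw [hvcoe]
    have h2 : Real.sqrt (2 * Real.pi * (v:ℝ)) = Real.sqrt (2 * Real.pi) * s := by
      rw [h1, Real.sqrt_mul (by positivity), Real.sqrt_sq hs.le]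
    have h3 : -(s * x + c - m) ^ 2 / (2 * (v:ℝ)) = -(x + z) ^ 2 / 2 := by
      rw [hsm, hvcoe]
      field_simp
    rw [h2, h3, mul_inv]
  have hIeq : ∫ y in c..d, gaussianPDFReal m v y
      = (Real.sqrt (2 * Real.pi))⁻¹ * ∫ x in (0:ℝ)..(Real.sqrt 2), Real.exp (-(x + z) ^ 2 / 2) := by
    have hcomp := intervalIntegral.integral_comp_mul_add (a := (0:ℝ)) (b := Real.sqrt 2)
      (f := gaussianPDFReal m v) hs.ne' c
    rw [show s * 0 + c = c by ring] at hcomp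
    have : ∫ y in c..d, gaussianPDFReal m v y
        = s * ∫ x in (0:ℝ)..(Real.sqrt 2), gaussianPDFReal m v (s * x + c) := by
      rw [hcomp, hddef, smul_eq_mul, ← mul_assoc, mul_inv_cancel₀ hs.ne', one_mul]
    rw [this]
    simp only [hpdf]
    rw [intervalIntegral.integral_const_mul]
    rw [← mul_assoc]
    rw [show s * ((Real.sqrt (2 * Real.pi))⁻¹ * s⁻¹) = (Real.sqrt (2 * Real.pi))⁻¹ *
      (s * s⁻¹) by ring, mul_inv_cancel₀ hs.ne', mul_one]
  have hmass_le : mass ≤ ∫ y in c..d, gaussianPDFReal m v y := by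
    rw [hIeq]
    have htail := tail_integral_lb hz1
    have : mass = (Real.sqrt (2 * Real.pi))⁻¹ * (Real.exp (-z ^ 2 / 2) * ((z ^ 2 - 1) / z ^ 3)) := by
      rw [hmassdef]; field_simp
    rw [this]
    exact mul_le_mul_of_nonneg_left htail (by positivity)
  have hIoc : ((gaussianReal m v) (Set.Ioc c d)).toReal = ∫ y in c..d, gaussianPDFReal m v y := by
    rw [gaussianReal_apply_eq_integral m hv, intervalIntegral.integral_of_le hcd,
      ENNReal.toReal_ofReal]
    exact setIntegral_nonneg measurableSet_Ioc fun y _ => gaussianPDFReal_nonneg m v y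
  have htail_prob : mass ≤ ((gaussianReal m v) (Set.Ioi c)).toReal := by
    refine le_trans (hmass_le.trans_eq hIoc.symm) ?_
    exact ENNReal.toReal_mono (measure_ne_top _ _) (measure_mono Set.Ioc_subset_Ioi_self)
  set p : ℝ := ((gaussianReal m v) (Set.Ioi c)).toReal with hpdef
  have hp1 : p ≤ 1 := by
    rw [hpdef]
    exact ENNReal.toReal_le_of_le_ofReal one_pos.le (by simpa using prob_le_one)
  -- Step 2 : independence
  set q : ℝ≥0∞ := (gaussianReal m v) (Set.Iic c) with hqdef
  have hq1 : q ≤ 1 := prob_le_one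
  set A : Set Ω := {ω | ∃ j, c < X j ω} with hAdef
  have hAeq : A = ⋃ j, X j ⁻¹' Set.Ioi c := by
    ext ω; simp [hAdef]
  have hAmeas : MeasurableSet A := by
    rw [hAeq]; exact MeasurableSet.iUnion fun j => (hmeas j) measurableSet_Ioi
  have hAc : Aᶜ = ⋂ j, X j ⁻¹' Set.Iic c := by
    ext ω; simp [hAdef, not_lt]
  have hprod : P Aᶜ = q ^ r := by
    rw [hAc, hindep.meas_iInter (fun j => ⟨Set.Iic c, measurableSet_Iic, rfl⟩)]
    have hj : ∀ j : Fin r, P (X j ⁻¹' Set.Iic c) = q := fun j => by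
      rw [← Measure.map_apply (hmeas j) measurableSet_Iic, hlaw j, hqdef]
    simp only [hj, Finset.prod_const, Finset.card_univ, Fintype.card_fin]
  have hPA : P A = 1 - q ^ r := by
    have := prob_compl_eq_one_sub (μ := P) hAmeas.compl
    rw [compl_compl, hprod] at this
    exact this
  have hqr1 : q ^ r ≤ 1 := pow_le_one' hq1 r
  have hPAtoReal : (P A).toReal = 1 - (q.toReal) ^ r := by
    rw [hPA, ENNReal.toReal_sub_of_le hqr1 ENNReal.one_ne_top, ENNReal.toReal_one,
      ENNReal.toReal_pow]
  -- q.toReal = 1 - p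
  have hq_toReal : q.toReal = 1 - p := by
    have hcompl := prob_compl_eq_one_sub (μ := gaussianReal m v) (measurableSet_Ioi (a := c))
    rw [Set.compl_Ioi] at hcompl
    rw [hqdef, hcompl, ENNReal.toReal_sub_of_le prob_le_one ENNReal.one_ne_top,
      ENNReal.toReal_one, hpdef]
  -- Step 3 : combine
  have hLr : (r : ℝ) = Real.exp (Real.log r) := (Real.exp_log hr0).symm
  have hrmass : 2 * Real.log r ≤ (r : ℝ) * mass := by
    have hk := key_numeric hL
    rw [← hLr] at hk
    rw [hmassdef, hzdef]
    exact hk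
  have hqpow : q.toReal ^ r ≤ 1 / (r : ℝ) ^ 2 := by
    have h0 : 0 ≤ 1 - p := by
      rw [← hq_toReal]; exact ENNReal.toReal_nonneg
    have hstep : 1 - p ≤ Real.exp (-mass) := by
      have := Real.add_one_le_exp (-mass)
      have hmp : mass ≤ p := le_trans htail_prob le_rfl
      linarith
    have h2 : q.toReal ^ r ≤ Real.exp (-mass) ^ r := by
      rw [hq_toReal]
      exact pow_le_pow_left₀ h0 hstep r
    have h3 : Real.exp (-mass) ^ r = Real.exp ((r : ℝ) * (-mass)) := by
      rw [← Real.exp_nat_mul]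
    have h4 : Real.exp ((r : ℝ) * (-mass)) ≤ Real.exp (-(2 * Real.log r)) := by
      apply Real.exp_le_exp.mpr
      nlinarith [hrmass]
    have h5 : Real.exp (-(2 * Real.log r)) = 1 / (r : ℝ) ^ 2 := by
      rw [Real.exp_neg, show 2 * Real.log r = Real.log r + Real.log r by ring,
        Real.exp_add, ← Real.exp_log hr0]
      rw [Real.log_exp]
      field_simp
    calc q.toReal ^ r ≤ Real.exp (-mass) ^ r := h2
      _ = Real.exp ((r : ℝ) * (-mass)) := h3
      _ ≤ Real.exp (-(2 * Real.log r)) := h4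
      _ = 1 / (r : ℝ) ^ 2 := h5
  rw [hPAtoReal]
  linarith
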